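/- arXiv:2108.12638 — 2 statements merged into one kernel-verified Lean document; each statement's English description precedes it below -/
import Mathlib

section
/- Let f be a transcendental entire function and let m > 1. Then, for all sufficiently large r, M( (1/(2m))·r^{1/(2m)}·log r , f ) ≥ ( (1/(2m))·M(r^{1/(2m)},f)^{1/(2m)}·log M(r^{1/(2m)},f) )^m. (In the paper's notation: M(log r^{(1/(2m)) r^{1/(2m)}}, f) ≥ (log M(r^{1/(2m)},f)^{(1/(2m)) M(r^{1/(2m)},f)^{1/(2m)}})^m for sufficiently large r.) -/
open Filter MeasureTheory Topology

/-- The maximum modulus `M(r, f) = max {|f z| : |z| = r}`. -/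
noncomputable def maxMod (f : ℂ → ℂ) (r : ℝ) : ℝ :=
  sSup ((fun z => ‖f z‖) '' Metric.sphere (0 : ℂ) r)

/-- The minimum modulus `L(r, f) = min {|f z| : |z| = r}`. -/
noncomputable def minMod (f : ℂ → ℂ) (r : ℝ) : ℝ :=
  sInf ((fun z => ‖f z‖) '' Metric.sphere (0 : ℂ) r)

/-- A transcendental entire function: entire and not a polynomial. -/
def TranscendentalEntire (f : ℂ → ℂ) : Prop :=
  Differentiable ℂ f ∧ ¬ ∃ p : Polynomial ℂ, ∀ z, f z = p.eval z

lemma maxMod_nonneg (f : ℂ → ℂ) (r : ℝ) : 0 ≤ maxMod f r :=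
  Real.sSup_nonneg (by rintro y ⟨z, _, rfl⟩; positivity)

lemma bddAbove_image_sphere (f : ℂ → ℂ) (hf : Continuous f) (r : ℝ) :
    BddAbove ((fun z => ‖f z‖) '' Metric.sphere (0 : ℂ) r) :=
  ((isCompact_sphere (0 : ℂ) r).image (continuous_norm.comp hf)).bddAbove

lemma abs_le_maxMod (f : ℂ → ℂ) (hf : Continuous f) (z : ℂ) :
    ‖f z‖ ≤ maxMod f ‖z‖ :=
  le_csSup (bddAbove_image_sphere f hf _)
    ⟨z, by simp [mem_sphere_zero_iff_norm], rfl⟩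

lemma maxMod_mono (f : ℂ → ℂ) (hf : Differentiable ℂ f) {a b : ℝ}
    (ha : 0 ≤ a) (hab : a ≤ b) : maxMod f a ≤ maxMod f b := by
  rcases eq_or_lt_of_le (ha.trans hab) with hb | hb
  · have : a = b := le_antisymm hab (hb ▸ ha)
    rw [this]
  apply Real.sSup_le _ (maxMod_nonneg f b)
  rintro y ⟨z, hz, rfl⟩
  have hzc : z ∈ closure (Metric.ball (0 : ℂ) b) := by
    rw [closure_ball (0 : ℂ) hb.ne']
    simp only [Metric.mem_closedBall, Metric.mem_sphere] at hz ⊢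
    exact hz ▸ hab
  refine Complex.norm_le_of_forall_mem_frontier_norm_le Metric.isBounded_ball
    hf.diffContOnCl (fun w hw => ?_) hzc
  rw [frontier_ball (0 : ℂ) hb.ne'] at hw
  exact le_csSup (bddAbove_image_sphere f hf.continuous b) ⟨w, hw, rfl⟩

lemma maxMod_tendsto (f : ℂ → ℂ) (hf : TranscendentalEntire f) :
    Filter.Tendsto (maxMod f) atTop atTop := by
  rw [tendsto_atTop]
  intro C
  have hex : ∃ r0, 0 ≤ r0 ∧ C ≤ maxMod f r0 := by
    by_contra h
    push_neg at h
    have hb : ∀ z, ‖f z‖ ≤ C := by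
      intro z
      have h1 := abs_le_maxMod f hf.1.continuous z
      have h2 := h ‖z‖ (norm_nonneg z)
      linarith
    obtain ⟨c, hc⟩ := hf.1.exists_eq_const_of_bounded
      (isBounded_iff_forall_norm_le.2 ⟨C, by
        rintro x ⟨z, rfl⟩; exact hb z⟩)
    exact hf.2 ⟨Polynomial.C c, fun z => by simp [hc]⟩
  obtain ⟨r0, hr0, hC⟩ := hex
  filter_upwards [eventually_ge_atTop r0] with r hr
  exact hC.trans (maxMod_mono f hf.1 hr0 hr)

/-- For a transcendental entire `f` and `m > 1`, for all sufficiently large `r`,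
`M((1/(2m)) r^{1/(2m)} log r, f) ≥ ((1/(2m)) M(r^{1/(2m)},f)^{1/(2m)} log M(r^{1/(2m)},f))^m`. -/
theorem maxMod_log_power_estimate (f : ℂ → ℂ) (hf : TranscendentalEntire f)
    (m : ℝ) (hm : 1 < m) :
    ∀ᶠ r : ℝ in atTop,
      maxMod f ((1 / (2 * m)) * r ^ (1 / (2 * m)) * Real.log r) ≥
        ((1 / (2 * m)) * (maxMod f (r ^ (1 / (2 * m)))) ^ (1 / (2 * m)) *
          Real.log (maxMod f (r ^ (1 / (2 * m))))) ^ m := by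
  have hm0 : (0 : ℝ) < m := by linarith
  have h2m : (0 : ℝ) < 2 * m := by linarith
  have hem : (0 : ℝ) < 1 / (2 * m) := by positivity
  -- eventual bound : log x ≤ 2m * x^(1/(2m)) for large x
  have hlog : ∀ᶠ x : ℝ in atTop, Real.log x ≤ (2 * m) * x ^ (1 / (2 * m)) := by
    have := (isLittleO_log_rpow_atTop hem).bound h2m
    filter_upwards [this, eventually_ge_atTop (1 : ℝ)] with x hx hx1
    have : |Real.log x| ≤ 2 * m * |x ^ (1 / (2 * m))| := by
      simpa [Real.norm_eq_abs] using hx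
    calc Real.log x ≤ |Real.log x| := le_abs_self _
      _ ≤ 2 * m * |x ^ (1 / (2 * m))| := this
      _ = 2 * m * x ^ (1 / (2 * m)) := by
          rw [abs_of_nonneg (Real.rpow_nonneg (by linarith) _)]
  obtain ⟨L0, hL0⟩ := (eventually_atTop.mp (hlog.and (eventually_ge_atTop (1 : ℝ))))
  have hsr : Filter.Tendsto (fun r : ℝ => r ^ (1 / (2 * m))) atTop atTop :=
    tendsto_rpow_atTop hem
  have hML : Filter.Tendsto (fun r : ℝ => maxMod f (r ^ (1 / (2 * m)))) atTop atTop :=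
    (maxMod_tendsto f hf).comp hsr
  filter_upwards [eventually_ge_atTop (1 : ℝ), hsr.eventually_ge_atTop (Real.exp 1),
    hML.eventually_ge_atTop L0] with r hr1 hse hLge
  set s : ℝ := r ^ (1 / (2 * m)) with hs_def
  set L : ℝ := maxMod f s with hL_def
  have hr0 : (0 : ℝ) < r := by linarith
  have hs0 : (0 : ℝ) < s := Real.rpow_pos_of_pos hr0 _
  have hlogs1 : 1 ≤ Real.log s := by
    rw [Real.le_log_iff_exp_le hs0]; simpa using hse
  -- argument equality
  have harg : (1 / (2 * m)) * r ^ (1 / (2 * m)) * Real.log r = s * Real.log s := by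
    rw [hs_def, Real.log_rpow hr0]; ring
  have hL1 : (1 : ℝ) ≤ L := le_trans (hL0 L0 le_rfl).2 hLge
  have hL0' : (0 : ℝ) < L := by linarith
  have hlogL : Real.log L ≤ 2 * m * L ^ (1 / (2 * m)) := (hL0 L hLge).1
  have hlogL0 : 0 ≤ Real.log L := Real.log_nonneg hL1
  -- base estimate
  have hbase : (1 / (2 * m)) * L ^ (1 / (2 * m)) * Real.log L ≤ L ^ (1 / m) := by
    have h1 : (1 / (2 * m)) * Real.log L ≤ L ^ (1 / (2 * m)) := by
      calc (1 / (2 * m)) * Real.log L ≤ (1 / (2 * m)) * (2 * m * L ^ (1 / (2 * m))) :=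
            mul_le_mul_of_nonneg_left hlogL (le_of_lt hem)
        _ = L ^ (1 / (2 * m)) := by field_simp
    calc (1 / (2 * m)) * L ^ (1 / (2 * m)) * Real.log L
        = L ^ (1 / (2 * m)) * ((1 / (2 * m)) * Real.log L) := by ring
      _ ≤ L ^ (1 / (2 * m)) * L ^ (1 / (2 * m)) :=
          mul_le_mul_of_nonneg_left h1 (Real.rpow_nonneg hL0'.le _)
      _ = L ^ (1 / (2 * m) + 1 / (2 * m)) := (Real.rpow_add hL0' _ _).symm
      _ = L ^ (1 / m) := by norm_num; ring_nf
  have hbase_nonneg : 0 ≤ (1 / (2 * m)) * L ^ (1 / (2 * m)) * Real.log L := by positivity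
  have hpow : ((1 / (2 * m)) * L ^ (1 / (2 * m)) * Real.log L) ^ m ≤ L := by
    calc ((1 / (2 * m)) * L ^ (1 / (2 * m)) * Real.log L) ^ m
        ≤ (L ^ (1 / m)) ^ m := Real.rpow_le_rpow hbase_nonneg hbase hm0.le
      _ = L ^ ((1 / m) * m) := (Real.rpow_mul hL0'.le _ _).symm
      _ = L := by rw [one_div_mul_cancel hm0.ne', Real.rpow_one]
  have hfinal : L ≤ maxMod f (s * Real.log s) := by
    rw [hL_def]
    exact maxMod_mono f hf.1 hs0.le (le_mul_of_one_le_right hs0.le hlogs1)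
  rw [ge_iff_le, harg]
  exact hpow.trans hfinal
end

section
/- Let f be a transcendental entire function and let c > 1. Then M(r,f)^c ≤ M(r^c, f) for all sufficiently large r. -/
open Filter MeasureTheory Topology
open scoped NNReal

namespace MaxModAux

lemma bddAbove_aux (f : ℂ → ℂ) (hf : Continuous f) (r : ℝ) :
    BddAbove ((fun z => ‖f z‖) '' Metric.sphere (0 : ℂ) r) :=
  ((isCompact_sphere (0 : ℂ) r).image (continuous_norm.comp hf)).bddAbove

lemma abs_le_maxMod {f : ℂ → ℂ} (hf : Continuous f) {z : ℂ} {r : ℝ}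
    (hz : z ∈ Metric.sphere (0 : ℂ) r) : ‖f z‖ ≤ maxMod f r :=
  le_csSup (bddAbove_aux f hf r) (Set.mem_image_of_mem _ hz)

lemma maxMod_le {f : ℂ → ℂ} {r B : ℝ} (hr : 0 ≤ r)
    (h : ∀ z ∈ Metric.sphere (0 : ℂ) r, ‖f z‖ ≤ B) : maxMod f r ≤ B := by
  apply csSup_le
  · exact (NormedSpace.sphere_nonempty.2 hr).image _
  · rintro x ⟨z, hz, rfl⟩; exact h z hz

/-- The Taylor coefficient of an entire function. -/
noncomputable def coef (f : ℂ → ℂ) (n : ℕ) : ℂ :=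
  cauchyPowerSeries f 0 1 n (fun _ => 1)

lemma series_eq {f : ℂ → ℂ} (hf : Differentiable ℂ f) {R : ℝ≥0} (hR : 0 < R) :
    cauchyPowerSeries f 0 1 = cauchyPowerSeries f 0 R :=
  (hf.hasFPowerSeriesOnBall 0 one_pos).hasFPowerSeriesAt.eq_formalMultilinearSeries
    (hf.hasFPowerSeriesOnBall 0 hR).hasFPowerSeriesAt

lemma apply_eq (p : FormalMultilinearSeries ℂ ℂ ℂ) (n : ℕ) (z : ℂ) :
    p n (fun _ => z) = z ^ n * p n (fun _ => 1) := by
  have := (p n).map_smul_univ (fun _ : Fin n => z) (fun _ => 1)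
  simpa [smul_eq_mul] using this

/-- Cauchy's estimate. -/
lemma cauchy_bound {f : ℂ → ℂ} (hf : Differentiable ℂ f) {R : ℝ} (hR : 0 < R) (n : ℕ) :
    ‖coef f n‖ * R ^ n ≤ maxMod f R := by
  lift R to ℝ≥0 using hR.le
  have hR' : 0 < R := by exact_mod_cast hR
  have h1 : ‖coef f n‖ ≤ ‖cauchyPowerSeries f 0 R n‖ := by
    rw [coef, series_eq hf hR']
    calc ‖cauchyPowerSeries f 0 R n (fun _ => 1)‖
        = ‖cauchyPowerSeries f 0 R n (fun _ => 1)‖ := rfl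
      _ ≤ ‖cauchyPowerSeries f 0 R n‖ * ∏ _i : Fin n, ‖(1 : ℂ)‖ :=
          (cauchyPowerSeries f 0 R n).le_opNorm _
      _ = ‖cauchyPowerSeries f 0 R n‖ := by simp
  have h2 : ‖cauchyPowerSeries f 0 R n‖ ≤
      ((2 * Real.pi)⁻¹ * ∫ θ : ℝ in (0)..2 * Real.pi, ‖f (circleMap 0 R θ)‖) * |(R : ℝ)|⁻¹ ^ n :=
    norm_cauchyPowerSeries_le f 0 R n
  have h3 : (∫ θ : ℝ in (0)..2 * Real.pi, ‖f (circleMap 0 R θ)‖) ≤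
      2 * Real.pi * maxMod f R := by
    have : (∫ θ : ℝ in (0)..2 * Real.pi, ‖f (circleMap 0 R θ)‖) ≤
        ∫ _θ : ℝ in (0)..2 * Real.pi, maxMod f R := by
      apply intervalIntegral.integral_mono_on Real.two_pi_pos.le
      · exact ((hf.continuous.comp (continuous_circleMap 0 R)).norm).intervalIntegrable _ _
      · exact intervalIntegrable_const
      · intro θ _
        exact abs_le_maxMod hf.continuous (circleMap_mem_sphere 0 (by positivity) θ)
    simpa using this
  have hM : 0 ≤ maxMod f R :=
    (norm_nonneg _).trans (abs_le_maxMod hf.continuous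
      (circleMap_mem_sphere 0 (by positivity) 0))
  have h4 : ‖cauchyPowerSeries f 0 R n‖ ≤ maxMod f R * |(R : ℝ)|⁻¹ ^ n := by
    refine h2.trans ?_
    apply mul_le_mul_of_nonneg_right _ (by positivity)
    rw [inv_mul_le_iff₀ Real.two_pi_pos]
    exact h3
  have habs : |(R : ℝ)| = (R : ℝ) := abs_of_pos hR
  calc ‖coef f n‖ * (R : ℝ) ^ n
      ≤ (maxMod f R * |(R : ℝ)|⁻¹ ^ n) * (R : ℝ) ^ n :=
        mul_le_mul_of_nonneg_right (h1.trans h4) (by positivity)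
    _ = maxMod f R := by
        rw [habs, inv_pow, mul_assoc, inv_mul_cancel₀ (by positivity), mul_one]

lemma exists_coef_ne_zero {f : ℂ → ℂ} (hf : TranscendentalEntire f) (N : ℕ) :
    ∃ n, N ≤ n ∧ coef f n ≠ 0 := by
  by_contra h
  push_neg at h
  apply hf.2
  refine ⟨∑ n ∈ Finset.range N, Polynomial.C (coef f n) * Polynomial.X ^ n, fun z => ?_⟩
  have hball : z ∈ Metric.eball (0 : ℂ) ⊤ := by simp
  have hs := (hf.1.hasFPowerSeriesOnBall 0 one_pos).hasSum hball
  rw [zero_add] at hs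
  have hs' : HasSum (fun n => z ^ n * coef f n) (f z) := by
    refine hs.congr_fun fun n => ?_
    rw [show ((1 : ℝ≥0) : ℝ) = (1 : ℝ) from rfl] at *
    exact (apply_eq _ n z).symm
  have hs'' : HasSum (fun n => z ^ n * coef f n)
      (∑ n ∈ Finset.range N, z ^ n * coef f n) := by
    apply hasSum_sum_of_ne_finset_zero
    intro n hn
    rw [h n (by simpa using hn)]
    ring
  rw [hs'.unique hs'']
  rw [Polynomial.eval_finset_sum]
  refine Finset.sum_congr rfl fun n _ => ?_
  simp only [Polynomial.eval_mul, Polynomial.eval_pow, Polynomial.eval_C, Polynomial.eval_X]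
  ring

/-- Growth lemma: a transcendental entire function grows faster than any power. -/
lemma growth {f : ℂ → ℂ} (hf : TranscendentalEntire f) (K : ℝ) :
    ∀ᶠ r : ℝ in atTop, r ^ K ≤ maxMod f r := by
  obtain ⟨n, hn, hne⟩ := exists_coef_ne_zero hf (⌈K⌉₊ + 1)
  have ha : 0 < ‖coef f n‖ := by simpa using hne
  have hKn : K < (n : ℝ) := by
    calc K ≤ ⌈K⌉₊ := Nat.le_ceil K
      _ < (n : ℝ) := by exact_mod_cast Nat.lt_of_lt_of_le (Nat.lt_succ_self _) hn
  have hlim : Tendsto (fun r : ℝ => r ^ (K - n)) atTop (nhds 0) := by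
    have := tendsto_rpow_neg_atTop (y := (n : ℝ) - K) (by linarith)
    simpa [neg_sub] using this
  filter_upwards [hlim.eventually (gt_mem_nhds ha), eventually_ge_atTop (1 : ℝ)]
    with r h1 h2
  have hr : 0 < r := lt_of_lt_of_le one_pos h2
  have : r ^ K = r ^ (K - n) * r ^ n := by
    rw [← Real.rpow_natCast r n, ← Real.rpow_add hr]
    ring_nf
  rw [this]
  calc r ^ (K - n) * r ^ n ≤ ‖coef f n‖ * r ^ n :=
        mul_le_mul_of_nonneg_right h1.le (by positivity)
    _ ≤ maxMod f r := cauchy_bound hf.1 hr n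

open Complex HadamardThreeLines in
/-- Hadamard three-circles inequality. -/
lemma three_circles {f : ℂ → ℂ} (hf : Differentiable ℂ f) {s r R : ℝ}
    (hs : 0 < s) (hsr : s < r) (hrR : r < R) :
    maxMod f r ≤ maxMod f s ^ (1 - (Real.log r - Real.log s) / (Real.log R - Real.log s)) *
      maxMod f R ^ ((Real.log r - Real.log s) / (Real.log R - Real.log s)) := by
  have hr : 0 < r := hs.trans hsr
  have hR : 0 < R := hr.trans hrR
  set L : ℝ := Real.log R - Real.log s with hL
  have hLpos : 0 < L := sub_pos.2 (Real.log_lt_log hs (hsr.trans hrR))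
  set t : ℝ := (Real.log r - Real.log s) / L with ht
  have htpos : 0 < t := div_pos (sub_pos.2 (Real.log_lt_log hs hsr)) hLpos
  have htlt : t < 1 := (div_lt_one hLpos).2 (by
    have := Real.log_lt_log hr hrR; simp only [hL]; linarith)
  set g : ℂ → ℂ := fun w => f (Complex.exp ((Real.log s : ℂ) + w * (L : ℂ))) with hg
  have hgdiff : Differentiable ℂ g := by
    apply hf.comp
    apply Complex.differentiable_exp.comp
    exact (differentiable_id.mul_const _).const_add _
  -- membership in spheres for boundary values
  have key : ∀ w : ℂ, ‖Complex.exp ((Real.log s : ℂ) + w * (L : ℂ))‖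
      = Real.exp (Real.log s + w.re * L) := by
    intro w
    rw [Complex.norm_exp]
    congr 1
    simp [Complex.add_re, Complex.mul_re, Complex.ofReal_re, Complex.ofReal_im]
  have ha : ∀ w ∈ Complex.re ⁻¹' {0}, ‖g w‖ ≤ maxMod f s := by
    intro w hw
    have hw0 : w.re = 0 := hw
    apply abs_le_maxMod hf.continuous
    rw [mem_sphere_zero_iff_norm, key, hw0]
    simp [Real.exp_log hs]
  have hb : ∀ w ∈ Complex.re ⁻¹' {1}, ‖g w‖ ≤ maxMod f R := by
    intro w hw
    have hw1 : w.re = 1 := hw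
    apply abs_le_maxMod hf.continuous
    rw [mem_sphere_zero_iff_norm, key, hw1]
    have : Real.log s + 1 * L = Real.log R := by rw [one_mul, hL]; ring
    rw [this, Real.exp_log hR]
  have hB : BddAbove ((norm ∘ g) '' verticalClosedStrip 0 1) := by
    obtain ⟨C, hC⟩ := (isCompact_closedBall (0 : ℂ) R).exists_bound_of_continuousOn
      hf.continuous.continuousOn
    refine ⟨C, ?_⟩
    rintro x ⟨w, hw, rfl⟩
    have hw' : w.re ∈ Set.Icc (0:ℝ) 1 := hw
    apply hC
    rw [Metric.mem_closedBall, dist_zero_right, key]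
    have h1 : Real.log s + w.re * L ≤ Real.log R := by
      have : w.re * L ≤ 1 * L := mul_le_mul_of_nonneg_right hw'.2 hLpos.le
      simp only [hL] at this ⊢; linarith
    calc Real.exp (Real.log s + w.re * L) ≤ Real.exp (Real.log R) := Real.exp_le_exp.2 h1
      _ = R := Real.exp_log hR
  -- main bound pointwise on the circle of radius r
  apply maxMod_le hr.le
  intro z hz
  have hzr : z ∈ Set.range (circleMap 0 r) := by
    rw [range_circleMap, abs_of_pos hr]; exact hz
  obtain ⟨θ, hθ⟩ := hzr
  set w : ℂ := (t : ℂ) + (θ / L : ℝ) * Complex.I with hwdef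
  have hwre : w.re = t := by simp [hwdef]
  have hwstrip : w ∈ verticalClosedStrip 0 1 := by
    show w.re ∈ Set.Icc (0:ℝ) 1
    rw [hwre]; exact ⟨htpos.le, htlt.le⟩
  have harg : (Real.log s : ℂ) + w * (L : ℂ) = (Real.log r : ℂ) + (θ : ℂ) * Complex.I := by
    rw [hwdef]
    have hLne : (L : ℂ) ≠ 0 := by exact_mod_cast hLpos.ne'
    have htL : (t : ℂ) * (L : ℂ) = (Real.log r : ℂ) - (Real.log s : ℂ) := by
      rw [ht]
      push_cast
      field_simp
    push_cast
    field_simp at htL ⊢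
    ring_nf
    ring_nf at htL
    linear_combination htL
  have hgz : g w = f z := by
    show f (Complex.exp ((Real.log s : ℂ) + w * (L : ℂ))) = f z
    congr 1
    rw [harg, ← hθ]
    simp only [circleMap, Complex.ofReal_zero, zero_add]
    rw [Complex.exp_add]
    congr 1
    rw [← Complex.ofReal_exp, Real.exp_log hr]
  have := norm_le_interp_of_mem_verticalClosedStrip₀₁' g hwstrip
    hgdiff.diffContOnCl hB ha hb
  rw [hgz, hwre] at this
  exact this

end MaxModAux

/-- For a transcendental entire `f` and `c > 1`, `M(r,f)^c ≤ M(r^c,f)` for all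
sufficiently large `r`. -/
theorem maxMod_pow_le_maxMod_rpow (f : ℂ → ℂ) (hf : TranscendentalEntire f)
    (c : ℝ) (hc : 1 < c) :
    ∀ᶠ r : ℝ in atTop, (maxMod f r) ^ c ≤ maxMod f (r ^ c) := by
  classical
  -- choose s > 1 with maxMod f s ≥ s
  obtain ⟨s, hs1, hsM⟩ : ∃ s : ℝ, 1 < s ∧ s ≤ maxMod f s := by
    obtain ⟨s, hs⟩ := ((MaxModAux.growth hf 1).and (eventually_gt_atTop (1:ℝ))).exists
    exact ⟨s, hs.2, by simpa [Real.rpow_one] using hs.1⟩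
  have hspos : 0 < s := one_pos.trans hs1
  have hMs : 0 < maxMod f s := lt_of_lt_of_le (one_pos.trans hs1) hsM
  have hlogs : 0 < Real.log s := Real.log_pos hs1
  set K : ℝ := Real.log (maxMod f s) / Real.log s with hK
  have hcomp : Tendsto (fun r : ℝ => r ^ c) atTop atTop :=
    tendsto_rpow_atTop (by linarith)
  filter_upwards [MaxModAux.growth hf K, MaxModAux.growth hf 1,
    hcomp.eventually (MaxModAux.growth hf 1), hcomp.eventually (eventually_ge_atTop (1:ℝ)),
    eventually_gt_atTop s, eventually_gt_atTop (1:ℝ)] with r hgK hg1 hgR hR1 hrs hr1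
  have hrpos : 0 < r := one_pos.trans hr1
  set R : ℝ := r ^ c with hR
  have hRpos : 0 < R := Real.rpow_pos_of_pos hrpos c
  have hrR : r < R := by
    calc r = r ^ (1:ℝ) := (Real.rpow_one r).symm
      _ < r ^ c := Real.rpow_lt_rpow_of_exponent_lt hr1 hc
  have hMr : 0 < maxMod f r := lt_of_lt_of_le hrpos (by simpa [Real.rpow_one] using hg1)
  have hMR : 0 < maxMod f R := lt_of_lt_of_le hRpos (by simpa [Real.rpow_one] using hgR)
  -- three circles
  have h3 := MaxModAux.three_circles hf.1 hspos hrs hrR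
  set ls := Real.log s
  set lr := Real.log r
  set ms := Real.log (maxMod f s)
  set mr := Real.log (maxMod f r)
  set mR := Real.log (maxMod f R)
  have hlr : 0 < lr := Real.log_pos hr1
  have hlsr : ls < lr := Real.log_lt_log hspos hrs
  have hlogR : Real.log R = c * lr := Real.log_rpow hrpos c
  set d : ℝ := lr - ls with hd
  set D : ℝ := Real.log R - ls with hD
  have hdpos : 0 < d := sub_pos.2 hlsr
  have hDpos : 0 < D := by rw [hD, hlogR]; nlinarith
  -- log of three circles
  have hlog3 : mr ≤ (1 - d / D) * ms + (d / D) * mR := by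
    have h1 : mr ≤ Real.log (maxMod f s ^ (1 - d / D) * maxMod f R ^ (d / D)) :=
      Real.log_le_log hMr h3
    rw [Real.log_mul (by positivity) (by positivity), Real.log_rpow hMs,
      Real.log_rpow hMR] at h1
    exact h1
  -- growth condition: ls * mr ≥ ms * lr
  have hgrow : ms * lr ≤ ls * mr := by
    have h1 : Real.log (r ^ K) ≤ mr := Real.log_le_log (by positivity) hgK
    rw [Real.log_rpow hrpos] at h1
    have h2 := mul_le_mul_of_nonneg_left h1 hlogs.le
    have h3' : Real.log s * (K * lr) = ms * lr := by
      rw [hK]; field_simp; exact mul_comm _ _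
    linarith [h3' ▸ h2]
  -- linear arithmetic to conclude c * mr ≤ mR
  have hkey : c * mr ≤ mR := by
    have hmul : D * mr ≤ (D - d) * ms + d * mR := by
      have := mul_le_mul_of_nonneg_left hlog3 hDpos.le
      have e1 : D * ((1 - d / D) * ms + d / D * mR) = (D - d) * ms + d * mR := by
        field_simp
        try ring
      linarith [e1 ▸ this]
    have hDd : D - d = (c - 1) * lr := by rw [hD, hd, hlogR]; ring
    have h2 : (c - 1) * (ms * lr) ≤ (c - 1) * (ls * mr) :=
      mul_le_mul_of_nonneg_left hgrow (by linarith)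
    have h3' : D * mr ≤ (c - 1) * (ls * mr) + d * mR := by
      rw [hDd] at hmul; nlinarith
    have h4 : d * (c * mr) ≤ d * mR := by
      have heq : D - (c - 1) * ls = c * d := by rw [hD, hd, hlogR]; ring
      have e : d * (c * mr) = D * mr - (c - 1) * (ls * mr) := by
        linear_combination (-mr) * heq
      linarith [h3']
    exact le_of_mul_le_mul_left h4 hdpos
  -- convert back from logs
  have : Real.log (maxMod f r ^ c) ≤ Real.log (maxMod f R) := by
    rw [Real.log_rpow hMr]; exact hkey
  exact (Real.log_le_log_iff (by positivity) hMR).1 this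
end
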